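/- If G is a 2-connected graph on n vertices, then md(G) \leq \lfloor n/2 \rfloor. -/

import Mathlib

open SimpleGraph

set_option linter.unusedSectionVars false

/-- An edge-coloring `Γ` is a monochromatic disconnection coloring (MD-coloring) of `G`
if every pair of distinct vertices is separated by a monochromatic edge-cut. -/
def IsMDColoring {V : Type*} (G : SimpleGraph V) (Γ : Sym2 V → ℕ) : Prop :=
  ∀ u v : V, u ≠ v → ∃ (c : ℕ) (F : Set (Sym2 V)), F ⊆ G.edgeSet ∧
    (∀ e ∈ F, Γ e = c) ∧ ¬ (G.deleteEdges F).Reachable u v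

/-- The monochromatic disconnection number of `G`: the maximum number of colors
used by an MD-coloring of `G`. -/
noncomputable def md {V : Type*} (G : SimpleGraph V) : ℕ :=
  sSup {n : ℕ | ∃ Γ : Sym2 V → ℕ, IsMDColoring G Γ ∧ (Γ '' G.edgeSet).ncard = n}

namespace MDAux

variable {V : Type*} [Fintype V] [DecidableEq V]

open Classical in
/-- vertices touched by an edge set -/
noncomputable def touched (E : Finset (Sym2 V)) : Finset V :=
  Finset.univ.filter fun v => ∃ e ∈ E, v ∈ e

lemma mem_touched {E : Finset (Sym2 V)} {v : V} : v ∈ touched E ↔ ∃ e ∈ E, v ∈ e := by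
  simp [touched]

lemma touched_mono {E E' : Finset (Sym2 V)} (h : E ⊆ E') : touched E ⊆ touched E' := by
  intro v hv
  rw [mem_touched] at hv ⊢
  obtain ⟨e, he, hve⟩ := hv
  exact ⟨e, h he, hve⟩

/-- The invariant maintained along the ear-growing induction. -/
def Inv (G : SimpleGraph V) (Γ : Sym2 V → ℕ) (E : Finset (Sym2 V)) : Prop :=
  (↑E : Set (Sym2 V)) ⊆ G.edgeSet ∧ E.Nonempty ∧
  (∀ u ∈ touched E, ∀ v ∈ touched E,
    (SimpleGraph.fromEdgeSet (↑E : Set (Sym2 V))).Reachable u v) ∧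
  2 * (E.image Γ).card ≤ (touched E).card

section Walks

variable {G : SimpleGraph V}

lemma support_mem_edge_or_end :
    ∀ {a b : V} (p : G.Walk a b) {v : V}, v ∈ p.support → v = b ∨ ∃ e ∈ p.edges, v ∈ e := by
  intro a b p
  induction p with
  | nil =>
    intro v hv
    left
    simpa using hv
  | @cons a c b h q ih =>
    intro v hv
    rw [Walk.support_cons, List.mem_cons] at hv
    rcases hv with rfl | hv
    · exact Or.inr ⟨s(v, c), by simp [Walk.edges_cons], by simp⟩
    · rcases ih hv with h1 | ⟨e, he, hve⟩
      · exact Or.inl h1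
      · exact Or.inr ⟨e, by simp [Walk.edges_cons, he], hve⟩

lemma exists_cross_adj {S : Set V} :
    ∀ {a b : V} (_ : G.Walk a b), a ∈ S → b ∉ S → ∃ x u, x ∈ S ∧ u ∉ S ∧ G.Adj x u := by
  intro a b p
  induction p with
  | nil => intro ha hb; exact absurd ha hb
  | @cons a c b h q ih =>
    intro ha hb
    by_cases hc : c ∈ S
    · exact ih hc hb
    · exact ⟨a, c, ha, hc, h⟩

lemma exists_first_hit (S : Set V) :
    ∀ {u z : V} (q : G.Walk u z), u ∉ S → z ∈ S →
      ∃ w, w ∈ S ∧ ∃ r : G.Walk u w, (∀ v ∈ r.support, v ∈ q.support) ∧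
        (∀ v ∈ r.support, v ≠ w → v ∉ S) ∧ (∀ e ∈ r.edges, e ∈ q.edges) := by
  intro u z q
  induction q with
  | nil => intro hu hz; exact absurd hz hu
  | @cons u c z h q ih =>
    intro hu hz
    by_cases hc : c ∈ S
    · refine ⟨c, hc, Walk.cons h Walk.nil, ?_, ?_, ?_⟩
      · intro v hv
        simp only [Walk.support_cons, Walk.support_nil, List.mem_cons,
          List.not_mem_nil, or_false] at hv
        rw [Walk.support_cons, List.mem_cons]
        rcases hv with rfl | rfl
        · exact Or.inl rfl
        · exact Or.inr (Walk.start_mem_support q)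
      · intro v hv hvw
        simp only [Walk.support_cons, Walk.support_nil, List.mem_cons,
          List.not_mem_nil, or_false] at hv
        rcases hv with rfl | rfl
        · exact hu
        · exact absurd rfl hvw
      · intro e he
        simp only [Walk.edges_cons, Walk.edges_nil, List.mem_singleton] at he
        simp [Walk.edges_cons, he]
    · obtain ⟨w, hwS, r, hrsup, hrT, hredg⟩ := ih hc hz
      refine ⟨w, hwS, Walk.cons h r, ?_, ?_, ?_⟩
      · intro v hv
        rw [Walk.support_cons, List.mem_cons] at hv ⊢
        rcases hv with rfl | hv
        · exact Or.inl rfl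
        · exact Or.inr (hrsup v hv)
      · intro v hv hvw
        rw [Walk.support_cons, List.mem_cons] at hv
        rcases hv with rfl | hv
        · exact hu
        · exact hrT v hv hvw
      · intro e he
        rw [Walk.edges_cons, List.mem_cons] at he ⊢
        rcases he with rfl | he
        · exact Or.inl rfl
        · exact Or.inr (hredg e he)

lemma edges_have_outside (S : Set V) :
    ∀ {u w : V} (q : G.Walk u w), (∀ v ∈ q.support, v = w ∨ v ∉ S) →
      ∀ e ∈ q.edges, ∃ v, v ∈ e ∧ v ∉ S := by
  intro u w q
  induction q with
  | nil => intro _ e he; simp at he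
  | @cons u c w h q ih =>
    intro hsup e he
    rw [Walk.edges_cons, List.mem_cons] at he
    rcases he with rfl | he
    · rcases hsup u (by simp [Walk.support_cons]) with rfl | huS
      · rcases hsup c (by simp [Walk.support_cons, Walk.start_mem_support]) with rfl | hcS
        · exact absurd rfl h.ne
        · exact ⟨c, by simp, hcS⟩
      · exact ⟨u, by simp, huS⟩
    · exact ih (fun v hv => hsup v (by rw [Walk.support_cons]; exact List.mem_cons_of_mem _ hv)) e he

lemma split_at_edge :
    ∀ {x y : V} (p : G.Walk x y), p.edges.Nodup → ∀ {u v : V}, s(u, v) ∈ p.edges →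
      (∃ q : G.Walk x u, ∃ r : G.Walk v y,
        (∀ f ∈ q.edges, f ∈ p.edges ∧ f ≠ s(u, v)) ∧
        (∀ f ∈ r.edges, f ∈ p.edges ∧ f ≠ s(u, v))) ∨
      (∃ q : G.Walk x v, ∃ r : G.Walk u y,
        (∀ f ∈ q.edges, f ∈ p.edges ∧ f ≠ s(u, v)) ∧
        (∀ f ∈ r.edges, f ∈ p.edges ∧ f ≠ s(u, v))) := by
  intro x y p
  induction p with
  | nil => intro _ u v he; simp at he
  | @cons x c y h q ih =>
    intro hnd u v he
    rw [Walk.edges_cons, List.nodup_cons] at hnd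
    rw [Walk.edges_cons, List.mem_cons] at he
    rcases he with heq | he
    · rw [Sym2.eq_iff] at heq
      rcases heq with ⟨rfl, rfl⟩ | ⟨rfl, rfl⟩
      · left
        refine ⟨Walk.nil, q, ?_, ?_⟩
        · intro f hf; simp at hf
        · intro f hf
          refine ⟨by rw [Walk.edges_cons]; exact List.mem_cons_of_mem _ hf, ?_⟩
          intro hfe
          rw [hfe] at hf
          exact hnd.1 hf
      · right
        refine ⟨Walk.nil, q, ?_, ?_⟩
        · intro f hf; simp at hf
        · intro f hf
          refine ⟨by rw [Walk.edges_cons]; exact List.mem_cons_of_mem _ hf, ?_⟩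
          intro hfe
          rw [Sym2.eq_swap] at hfe
          rw [hfe] at hf
          exact hnd.1 hf
    · rcases ih hnd.2 he with ⟨q₀, r₀, hq₀, hr₀⟩ | ⟨q₀, r₀, hq₀, hr₀⟩
      · left
        refine ⟨Walk.cons h q₀, r₀, ?_, ?_⟩
        · intro f hf
          rw [Walk.edges_cons, List.mem_cons] at hf
          rcases hf with rfl | hf
          · exact ⟨by rw [Walk.edges_cons]; exact List.mem_cons_self,
              fun hc => hnd.1 (hc ▸ he)⟩
          · exact ⟨by rw [Walk.edges_cons]; exact List.mem_cons_of_mem _ (hq₀ f hf).1,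
              (hq₀ f hf).2⟩
        · intro f hf
          exact ⟨by rw [Walk.edges_cons]; exact List.mem_cons_of_mem _ (hr₀ f hf).1,
            (hr₀ f hf).2⟩
      · right
        refine ⟨Walk.cons h q₀, r₀, ?_, ?_⟩
        · intro f hf
          rw [Walk.edges_cons, List.mem_cons] at hf
          rcases hf with rfl | hf
          · exact ⟨by rw [Walk.edges_cons]; exact List.mem_cons_self,
              fun hc => hnd.1 (hc ▸ he)⟩
          · exact ⟨by rw [Walk.edges_cons]; exact List.mem_cons_of_mem _ (hq₀ f hf).1,
              (hq₀ f hf).2⟩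
        · intro f hf
          exact ⟨by rw [Walk.edges_cons]; exact List.mem_cons_of_mem _ (hr₀ f hf).1,
            (hr₀ f hf).2⟩

end Walks

section Main

variable {G : SimpleGraph V} {Γ : Sym2 V → ℕ}

def IsMDColoring' (G : SimpleGraph V) (Γ : Sym2 V → ℕ) : Prop :=
  ∀ u v : V, u ≠ v → ∃ (c : ℕ) (F : Set (Sym2 V)), F ⊆ G.edgeSet ∧
    (∀ e ∈ F, Γ e = c) ∧ ¬ (G.deleteEdges F).Reachable u v

lemma from_le_delete {E : Finset (Sym2 V)} {F : Set (Sym2 V)}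
    (hEsub : (↑E : Set (Sym2 V)) ⊆ G.edgeSet) (hdisj : ∀ g ∈ E, g ∉ F) :
    SimpleGraph.fromEdgeSet (↑E : Set (Sym2 V)) ≤ G.deleteEdges F := by
  intro a b hab
  rw [fromEdgeSet_adj] at hab
  rw [deleteEdges_adj]
  exact ⟨(G.mem_edgeSet).mp (hEsub hab.1),
    hdisj _ (Finset.mem_coe.mp hab.1)⟩

lemma mem_support_of_mem_edge {a b : V} (p : G.Walk a b) {e : Sym2 V} {v : V}
    (he : e ∈ p.edges) (hv : v ∈ e) : v ∈ p.support := by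
  revert he hv
  induction e using Sym2.ind with
  | _ c d =>
    intro he hv
    rcases Sym2.mem_iff.mp hv with rfl | rfl
    · exact p.fst_mem_support_of_mem_edges he
    · exact p.snd_mem_support_of_mem_edges he

lemma twice (hM : IsMDColoring' G Γ) {E : Finset (Sym2 V)}
    (hEsub : (↑E : Set (Sym2 V)) ⊆ G.edgeSet)
    (hreach : ∀ u ∈ touched E, ∀ v ∈ touched E,
      (SimpleGraph.fromEdgeSet (↑E : Set (Sym2 V))).Reachable u v)
    {x y : V} (p : G.Walk x y) (hp : p.IsPath) (hxT : x ∈ touched E) (hyT : y ∈ touched E)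
    {e : Sym2 V} (he : e ∈ p.edges) (hnew : Γ e ∉ E.image Γ) :
    ∃ e' ∈ p.edges, e' ≠ e ∧ Γ e' = Γ e := by
  revert he hnew
  induction e using Sym2.ind with
  | _ u v =>
  intro he hnew
  have huv : G.Adj u v := p.adj_of_mem_edges he
  obtain ⟨c, F, hFsub, hmono, hnr⟩ := hM u v huv.ne
  by_contra hno
  push_neg at hno
  have heF : s(u, v) ∈ F := by
    by_contra heF
    exact hnr (SimpleGraph.Adj.reachable (by rw [deleteEdges_adj]; exact ⟨huv, heF⟩))
  have hc : c = Γ s(u, v) := (hmono _ heF).symm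
  have hFE : ∀ g ∈ E, g ∉ F := by
    intro g hg hgF
    have hgc : Γ g = Γ s(u, v) := by rw [hmono g hgF, hc]
    exact hnew (Finset.mem_image.mpr ⟨g, hg, hgc⟩)
  have hFP : ∀ f ∈ p.edges, f ≠ s(u, v) → f ∉ F := by
    intro f hf hne hfF
    exact hno f hf hne (by rw [hmono f hfF, hc])
  have hxyR : (G.deleteEdges F).Reachable x y :=
    Reachable.mono (from_le_delete hEsub hFE) (hreach x hxT y hyT)
  have htrans : ∀ {a b : V} (q : G.Walk a b),
      (∀ f ∈ q.edges, f ∈ p.edges ∧ f ≠ s(u, v)) → (G.deleteEdges F).Reachable a b := by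
    intro a b q hq
    exact (q.transfer (G.deleteEdges F) (fun f hf => by
      rw [edgeSet_deleteEdges]
      exact ⟨p.edges_subset_edgeSet (hq f hf).1, hFP f (hq f hf).1 (hq f hf).2⟩)).reachable
  rcases split_at_edge p hp.isTrail.edges_nodup he with ⟨q, r, hq, hr⟩ | ⟨q, r, hq, hr⟩
  · exact hnr (((htrans q hq).symm.trans hxyR).trans (htrans r hr).symm)
  · exact hnr (((htrans r hr).trans hxyR.symm).trans (htrans q hq))

lemma not_all_new (hM : IsMDColoring' G Γ) {E : Finset (Sym2 V)}
    (hEsub : (↑E : Set (Sym2 V)) ⊆ G.edgeSet)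
    (hreach : ∀ u ∈ touched E, ∀ v ∈ touched E,
      (SimpleGraph.fromEdgeSet (↑E : Set (Sym2 V))).Reachable u v)
    {x y : V} (hxy : x ≠ y) (hxT : x ∈ touched E) (hyT : y ∈ touched E)
    (p : G.Walk x y) :
    ∃ f ∈ p.edges, Γ f ∈ E.image Γ := by
  by_contra hno
  push_neg at hno
  obtain ⟨c, F, hFsub, hmono, hnr⟩ := hM x y hxy
  by_cases hPF : ∃ f ∈ p.edges, f ∈ F
  · obtain ⟨f₀, hf₀p, hf₀F⟩ := hPF
    have hFE : ∀ g ∈ E, g ∉ F := by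
      intro g hg hgF
      exact hno f₀ hf₀p (Finset.mem_image.mpr ⟨g, hg, by rw [hmono g hgF, hmono f₀ hf₀F]⟩)
    exact hnr (Reachable.mono (from_le_delete hEsub hFE) (hreach x hxT y hyT))
  · push_neg at hPF
    exact hnr (p.transfer (G.deleteEdges F) (fun f hf => by
      rw [edgeSet_deleteEdges]
      exact ⟨p.edges_subset_edgeSet hf, hPF f hf⟩)).reachable

lemma step (hM : IsMDColoring' G Γ) {E : Finset (Sym2 V)} (hInv : Inv G Γ E)
    {x y : V} (hxy : x ≠ y) (p : G.Walk x y) (hp : p.IsPath)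
    (hxT : x ∈ touched E) (hyT : y ∈ touched E)
    (hsup : ∀ v ∈ p.support, v ≠ x → v ≠ y → v ∉ touched E)
    (hnotE : ∀ e ∈ p.edges, e ∉ E) :
    Inv G Γ (E ∪ p.edges.toFinset) ∧ E.card < (E ∪ p.edges.toFinset).card := by
  obtain ⟨hEsub, hEne, hreach, hcount⟩ := hInv
  set P : Finset (Sym2 V) := p.edges.toFinset with hP
  set E' : Finset (Sym2 V) := E ∪ P with hE'
  have hndE : p.edges.Nodup := hp.isTrail.edges_nodup
  have hPcard : P.card = p.length := by
    rw [hP, List.toFinset_card_of_nodup hndE, Walk.length_edges]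
  have hlen : 1 ≤ p.length := by
    cases p with
    | nil => exact absurd rfl hxy
    | cons h q => rw [Walk.length_cons]; omega
  have hmemP : ∀ {f : Sym2 V}, f ∈ P ↔ f ∈ p.edges := fun {f} => List.mem_toFinset
  have hE'sub : (↑E' : Set (Sym2 V)) ⊆ G.edgeSet := by
    intro f hf
    rw [hE', Finset.coe_union] at hf
    rcases hf with hf | hf
    · exact hEsub hf
    · exact p.edges_subset_edgeSet (hmemP.mp (Finset.mem_coe.mp hf))
  have hTsub : touched E ⊆ touched E' := touched_mono Finset.subset_union_left
  have hsupT' : ∀ v ∈ p.support, v ∈ touched E' := by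
    intro v hv
    rcases support_mem_edge_or_end p hv with rfl | ⟨e, he, hve⟩
    · exact hTsub hyT
    · exact mem_touched.mpr ⟨e, Finset.mem_union_right _ (hmemP.mpr he), hve⟩
  have hT'sub : ∀ v ∈ touched E', v ∈ touched E ∨ v ∈ p.support := by
    intro v hv
    obtain ⟨e, he, hve⟩ := mem_touched.mp hv
    rcases Finset.mem_union.mp he with he | he
    · exact Or.inl (mem_touched.mpr ⟨e, he, hve⟩)
    · exact Or.inr (mem_support_of_mem_edge p (hmemP.mp he) hve)
  have hreach' : ∀ u ∈ touched E', ∀ v ∈ touched E',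
      (SimpleGraph.fromEdgeSet (↑E' : Set (Sym2 V))).Reachable u v := by
    have hle : SimpleGraph.fromEdgeSet (↑E : Set (Sym2 V)) ≤
        SimpleGraph.fromEdgeSet (↑E' : Set (Sym2 V)) :=
      fromEdgeSet_mono (Finset.coe_subset.mpr Finset.subset_union_left)
    have hx' : ∀ v ∈ p.support,
        (SimpleGraph.fromEdgeSet (↑E' : Set (Sym2 V))).Reachable x v := by
      intro v hv
      refine ((p.takeUntil v hv).transfer _ (fun f hf => ?_)).reachable
      have hfp : f ∈ p.edges := p.edges_takeUntil_subset hv hf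
      rw [edgeSet_fromEdgeSet]
      refine ⟨Finset.mem_coe.mpr (Finset.mem_union_right _ (hmemP.mpr hfp)), ?_⟩
      exact fun hd => (G.not_isDiag_of_mem_edgeSet (p.edges_subset_edgeSet hfp)) hd
    have key : ∀ v ∈ touched E',
        (SimpleGraph.fromEdgeSet (↑E' : Set (Sym2 V))).Reachable v x := by
      intro v hv
      rcases hT'sub v hv with hvT | hvs
      · exact Reachable.mono hle (hreach v hvT x hxT)
      · exact (hx' v hvs).symm
    intro u hu v hv
    exact (key u hu).trans (key v hv).symm
  have hkcard : (E'.image Γ).card = (E.image Γ).card + ((P.image Γ) \ (E.image Γ)).card := by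
    rw [hE', Finset.image_union, ← Finset.union_sdiff_self_eq_union,
      Finset.card_union_of_disjoint Finset.disjoint_sdiff]
  have hnewbound : 2 * ((P.image Γ) \ (E.image Γ)).card ≤ p.length - 1 := by
    obtain ⟨e₀, he₀p, he₀old⟩ := not_all_new hM hEsub hreach hxy hxT hyT p
    set Q := P.erase e₀ with hQ
    have hQcard : Q.card = p.length - 1 := by
      rw [hQ, Finset.card_erase_of_mem (hmemP.mpr he₀p), hPcard]
    have hfib : Q.card = ∑ b ∈ Q.image Γ, (Q.filter (fun a => Γ a = b)).card :=
      Finset.card_eq_sum_card_fiberwise (fun a ha => Finset.mem_image_of_mem Γ ha)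
    have hNEWsub : (P.image Γ) \ (E.image Γ) ⊆ Q.image Γ := by
      intro c hc
      obtain ⟨hcP, hcK⟩ := Finset.mem_sdiff.mp hc
      obtain ⟨f, hfP, hfc⟩ := Finset.mem_image.mp hcP
      refine Finset.mem_image.mpr ⟨f, ?_, hfc⟩
      rw [hQ, Finset.mem_erase]
      exact ⟨fun hfe => hcK (by rw [← hfc, hfe]; exact he₀old), hfP⟩
    have hfib2 : ∀ c ∈ (P.image Γ) \ (E.image Γ),
        2 ≤ (Q.filter (fun a => Γ a = c)).card := by
      intro c hc
      obtain ⟨hcP, hcK⟩ := Finset.mem_sdiff.mp hc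
      obtain ⟨f, hfP, hfc⟩ := Finset.mem_image.mp hcP
      have hcnot : Γ f ∉ E.image Γ := by rw [hfc]; exact hcK
      obtain ⟨f', hf'p, hf'ne, hf'c⟩ :=
        twice hM hEsub hreach p hp hxT hyT (hmemP.mp hfP) hcnot
      have hfQ : f ∈ Q := by
        rw [hQ, Finset.mem_erase]
        exact ⟨fun hfe => hcK (by rw [← hfc, hfe]; exact he₀old), hfP⟩
      have hf'Q : f' ∈ Q := by
        rw [hQ, Finset.mem_erase]
        refine ⟨fun hfe => hcK ?_, hmemP.mpr hf'p⟩
        rw [← hfc, ← hf'c, hfe]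
        exact he₀old
      rw [← Nat.lt_iff_add_one_le, Finset.one_lt_card]
      refine ⟨f, ?_, f', ?_, fun hff => hf'ne (hff.symm)⟩
      · exact Finset.mem_filter.mpr ⟨hfQ, hfc⟩
      · exact Finset.mem_filter.mpr ⟨hf'Q, by rw [hf'c, hfc]⟩
    calc 2 * ((P.image Γ) \ (E.image Γ)).card
        = ∑ _c ∈ (P.image Γ) \ (E.image Γ), 2 := by
          rw [Finset.sum_const, smul_eq_mul, mul_comm]
      _ ≤ ∑ c ∈ (P.image Γ) \ (E.image Γ), (Q.filter (fun a => Γ a = c)).card :=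
          Finset.sum_le_sum hfib2
      _ ≤ ∑ b ∈ Q.image Γ, (Q.filter (fun a => Γ a = b)).card :=
          Finset.sum_le_sum_of_subset hNEWsub
      _ = Q.card := hfib.symm
      _ = p.length - 1 := hQcard
  have hsupnodup := hp.support_nodup
  set SF := p.support.toFinset with hSF
  have hSFcard : SF.card = p.length + 1 := by
    rw [hSF, List.toFinset_card_of_nodup hsupnodup, Walk.length_support]
  have hST : SF ∩ touched E = {x, y} := by
    ext v
    simp only [Finset.mem_inter, Finset.mem_insert, Finset.mem_singleton, hSF,
      List.mem_toFinset]
    constructor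
    · rintro ⟨hv1, hv2⟩
      by_contra hcon
      push_neg at hcon
      exact hsup v hv1 hcon.1 hcon.2 hv2
    · rintro (rfl | rfl)
      · exact ⟨p.start_mem_support, hxT⟩
      · exact ⟨p.end_mem_support, hyT⟩
  have hT'card : (touched E).card + (p.length - 1) ≤ (touched E').card := by
    have h1 : (SF \ touched E).card = p.length - 1 := by
      have h2 := Finset.card_sdiff_add_card_inter SF (touched E)
      rw [hST] at h2
      have hxy2 : ({x, y} : Finset V).card = 2 := by
        rw [Finset.card_insert_of_notMem (by simp [hxy]), Finset.card_singleton]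
      omega
    have hsubT' : touched E ∪ (SF \ touched E) ⊆ touched E' := by
      intro v hv
      rcases Finset.mem_union.mp hv with hv | hv
      · exact hTsub hv
      · exact hsupT' v (List.mem_toFinset.mp (Finset.mem_sdiff.mp hv).1)
    calc (touched E).card + (p.length - 1)
        = (touched E ∪ (SF \ touched E)).card := by
          rw [Finset.card_union_of_disjoint Finset.disjoint_sdiff, h1]
      _ ≤ (touched E').card := Finset.card_le_card hsubT'
  constructor
  · refine ⟨hE'sub, hEne.mono Finset.subset_union_left, hreach', ?_⟩
    rw [hkcard]
    have : 2 * ((E.image Γ).card + ((P.image Γ) \ (E.image Γ)).card)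
        = 2 * (E.image Γ).card + 2 * ((P.image Γ) \ (E.image Γ)).card := by ring
    omega
  · have hepne : p.edges ≠ [] := by
      intro h0
      have hl := p.length_edges
      rw [h0] at hl
      simp at hl
      omega
    obtain ⟨e₁, he₁⟩ := List.exists_mem_of_ne_nil p.edges hepne
    apply Finset.card_lt_card
    rw [Finset.ssubset_iff_of_subset Finset.subset_union_left]
    exact ⟨e₁, Finset.mem_union_right _ (hmemP.mpr he₁), hnotE e₁ he₁⟩

lemma touched_pair {E : Finset (Sym2 V)}
    (hEsub : (↑E : Set (Sym2 V)) ⊆ G.edgeSet) (hEne : E.Nonempty) :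
    ∃ t₁ t₂, t₁ ≠ t₂ ∧ t₁ ∈ touched E ∧ t₂ ∈ touched E := by
  obtain ⟨e₁, he₁⟩ := hEne
  have he₁S : e₁ ∈ G.edgeSet := hEsub (Finset.mem_coe.mpr he₁)
  revert he₁ he₁S
  induction e₁ using Sym2.ind with
  | _ c d =>
  intro he₁ he₁S
  exact ⟨c, d, ((G.mem_edgeSet).mp he₁S).ne,
    mem_touched.mpr ⟨s(c, d), he₁, by simp⟩,
    mem_touched.mpr ⟨s(c, d), he₁, by simp⟩⟩

lemma ear_exists (hconn : G.Connected)
    (hcut : ∀ v : V, (G.induce ({v}ᶜ : Set V)).Connected)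
    [Fintype ↑G.edgeSet]
    {E : Finset (Sym2 V)} (hEsub : (↑E : Set (Sym2 V)) ⊆ G.edgeSet) (hEne : E.Nonempty)
    (hne : E ≠ G.edgeFinset) :
    ∃ (x y : V) (p : G.Walk x y), x ≠ y ∧ p.IsPath ∧ x ∈ touched E ∧ y ∈ touched E ∧
      (∀ v ∈ p.support, v ≠ x → v ≠ y → v ∉ touched E) ∧ (∀ e ∈ p.edges, e ∉ E) := by
  have hEsubF : E ⊆ G.edgeFinset := fun f hf => mem_edgeFinset.mpr (hEsub (Finset.mem_coe.mpr hf))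
  obtain ⟨estar, hestar, hestarE⟩ := Finset.exists_of_ssubset (lt_of_le_of_ne hEsubF hne)
  revert hestar hestarE
  induction estar using Sym2.ind with
  | _ a b =>
  intro hestar hestarE
  have hab : G.Adj a b := (G.mem_edgeSet).mp (mem_edgeFinset.mp hestar)
  by_cases hcase : a ∈ touched E ∧ b ∈ touched E
  · refine ⟨a, b, Walk.cons hab Walk.nil, hab.ne, ?_, hcase.1, hcase.2, ?_, ?_⟩
    · exact Walk.IsPath.nil.cons (by simp [hab.ne])
    · intro v hv hva hvb
      exfalso
      simp only [Walk.support_cons, Walk.support_nil, List.mem_cons,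
        List.not_mem_nil, or_false] at hv
      rcases hv with rfl | rfl
      · exact hva rfl
      · exact hvb rfl
    · intro e he
      simp only [Walk.edges_cons, Walk.edges_nil, List.mem_cons,
        List.not_mem_nil, or_false] at he
      rw [he]
      exact hestarE
  · have hout : ∃ u₀, u₀ ∉ touched E := by
      by_contra hcon
      push_neg at hcon
      exact hcase ⟨hcon a, hcon b⟩
    obtain ⟨u₀, hu₀⟩ := hout
    obtain ⟨t₁, t₂, ht12, ht₁, ht₂⟩ := touched_pair hEsub hEne
    obtain ⟨w0⟩ := hconn.preconnected t₁ u₀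
    obtain ⟨x, u, hxT, huT, hadj⟩ :=
      exists_cross_adj (S := {v : V | v ∈ touched E}) w0 ht₁ hu₀
    have hxT' : x ∈ touched E := hxT
    have huT' : u ∉ touched E := huT
    have hz : ∃ z, z ∈ touched E ∧ z ≠ x := by
      by_cases h1 : t₁ = x
      · refine ⟨t₂, ht₂, fun h => ht12 ?_⟩
        rw [h1, h]
      · exact ⟨t₁, ht₁, h1⟩
    obtain ⟨z, hzT, hzx⟩ := hz
    have hux : u ≠ x := fun h => huT' (h ▸ hxT')
    obtain ⟨w1⟩ := (hcut x).preconnected ⟨u, hux⟩ ⟨z, hzx⟩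
    let ι : (G.induce ({x}ᶜ : Set V)) →g G := ⟨Subtype.val, fun {c d} hcd => hcd⟩
    have hw2 : ∀ (s : ({x}ᶜ : Set V)) , ι s ≠ x := fun s => s.2
    let w2 : G.Walk u z := w1.map ι
    have hw2x : ∀ v ∈ w2.support, v ≠ x := by
      intro v hv
      rw [Walk.support_map] at hv
      obtain ⟨s, _, rfl⟩ := List.mem_map.mp hv
      exact s.2
    obtain ⟨w, hwT, r, hrsup, hrT, hredg⟩ :=
      exists_first_hit (S := {v : V | v ∈ touched E}) w2 huT' hzT
    have hwT' : w ∈ touched E := hwT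
    set r' := r.bypass with hr'
    have hr'path : r'.IsPath := Walk.bypass_isPath r
    have hr'sup : ∀ v ∈ r'.support, v ∈ r.support :=
      fun v hv => Walk.support_bypass_subset r hv
    have hr'x : ∀ v ∈ r'.support, v ≠ x :=
      fun v hv => hw2x v (hrsup v (hr'sup v hv))
    have hxw : x ≠ w := fun h =>
      (hw2x w (hrsup w r.end_mem_support)) h.symm
    have hxr' : x ∉ r'.support := fun h => (hr'x x h) rfl
    refine ⟨x, w, Walk.cons hadj r', hxw, hr'path.cons hxr', hxT', hwT', ?_, ?_⟩
    · intro v hv hvx hvw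
      rw [Walk.support_cons, List.mem_cons] at hv
      rcases hv with rfl | hv
      · exact absurd rfl hvx
      · exact hrT v (hr'sup v hv) hvw
    · intro e he
      rw [Walk.edges_cons, List.mem_cons] at he
      rcases he with rfl | he
      · intro heE
        exact huT' (mem_touched.mpr ⟨s(x, u), heE, by simp⟩)
      · have hcond : ∀ v ∈ r'.support, v = w ∨ v ∉ ({v : V | v ∈ touched E} : Set V) := by
          intro v hv
          by_cases hvw : v = w
          · exact Or.inl hvw
          · exact Or.inr (hrT v (hr'sup v hv) hvw)
        obtain ⟨v, hve, hvT⟩ := edges_have_outside _ r' hcond e he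
        intro heE
        exact hvT (mem_touched.mpr ⟨e, heE, hve⟩)

lemma up (hM : IsMDColoring' G Γ) (hconn : G.Connected)
    (hcut : ∀ v : V, (G.induce ({v}ᶜ : Set V)).Connected)
    [Fintype ↑G.edgeSet] :
    ∀ (d : ℕ) (E : Finset (Sym2 V)), Inv G Γ E → G.edgeFinset.card ≤ E.card + d →
      2 * (G.edgeFinset.image Γ).card ≤ Fintype.card V := by
  intro d
  induction d with
  | zero =>
    intro E hInv hle
    have hEsubF : E ⊆ G.edgeFinset :=
      fun f hf => mem_edgeFinset.mpr (hInv.1 (Finset.mem_coe.mpr hf))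
    have hEq : E = G.edgeFinset := Finset.eq_of_subset_of_card_le hEsubF (by omega)
    rw [← hEq]
    exact le_trans hInv.2.2.2 (Finset.card_le_univ _)
  | succ d ih =>
    intro E hInv hle
    by_cases hEq : E = G.edgeFinset
    · rw [← hEq]
      exact le_trans hInv.2.2.2 (Finset.card_le_univ _)
    · obtain ⟨x, y, p, hxy, hp, hxT, hyT, hsup, hnotE⟩ :=
        ear_exists hconn hcut hInv.1 hInv.2.1 hEq
      obtain ⟨hInv', hcard⟩ := step hM hInv hxy p hp hxT hyT hsup hnotE
      exact ih (E ∪ p.edges.toFinset) hInv' (by omega)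

lemma main (hcard : 3 ≤ Fintype.card V) (hconn : G.Connected)
    (hcut : ∀ v : V, (G.induce ({v}ᶜ : Set V)).Connected)
    [Fintype ↑G.edgeSet] (hM : IsMDColoring' G Γ) :
    2 * (G.edgeFinset.image Γ).card ≤ Fintype.card V := by
  obtain ⟨v₁, v₂, hne12⟩ := Fintype.exists_pair_of_one_lt_card (α := V) (by omega)
  obtain ⟨w⟩ := hconn.preconnected v₁ v₂
  have hadj : ∃ a b : V, G.Adj a b := by
    cases w with
    | nil => exact absurd rfl hne12
    | cons h q => exact ⟨_, _, h⟩
  obtain ⟨a, b, hab⟩ := hadj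
  have htt : touched ({s(a, b)} : Finset (Sym2 V)) = {a, b} := by
    ext v
    rw [mem_touched]
    simp [Sym2.mem_iff]
  have hInv0 : Inv G Γ {s(a, b)} := by
    refine ⟨?_, Finset.singleton_nonempty _, ?_, ?_⟩
    · intro f hf
      simp only [Finset.coe_singleton, Set.mem_singleton_iff] at hf
      rw [hf]
      exact (G.mem_edgeSet).mpr hab
    · intro u hu v hv
      have hadj' : (SimpleGraph.fromEdgeSet
          (↑({s(a, b)} : Finset (Sym2 V)) : Set (Sym2 V))).Adj a b := by
        rw [fromEdgeSet_adj]
        exact ⟨by simp, hab.ne⟩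
      rw [htt] at hu hv
      simp only [Finset.mem_insert, Finset.mem_singleton] at hu hv
      rcases hu with rfl | rfl <;> rcases hv with rfl | rfl
      · exact Reachable.refl _
      · exact hadj'.reachable
      · exact hadj'.symm.reachable
      · exact Reachable.refl _
    · rw [htt, Finset.image_singleton, Finset.card_singleton]
      have h2 : ({a, b} : Finset V).card = 2 := by
        rw [Finset.card_insert_of_notMem (by simp [hab.ne]), Finset.card_singleton]
      omega
  exact up hM hconn hcut G.edgeFinset.card {s(a, b)} hInv0 (by omega)

end Main

end MDAux

theorem stmt_12 {V : Type*} [Fintype V] (G : SimpleGraph V)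
    (hcard : 3 ≤ Fintype.card V) (hconn : G.Connected)
    (hcut : ∀ v : V, (G.induce ({v}ᶜ : Set V)).Connected) :
    md G ≤ Fintype.card V / 2 := by
  classical
  unfold md
  apply csSup_le'
  rintro N ⟨Γ, hM, rfl⟩
  have hM' : MDAux.IsMDColoring' G Γ := hM
  have h2 := MDAux.main hcard hconn hcut hM'
  have himg : Γ '' G.edgeSet = ↑(G.edgeFinset.image Γ) := by
    rw [Finset.coe_image, SimpleGraph.coe_edgeFinset]
  rw [himg, Set.ncard_coe_finset]
  rw [Nat.le_div_iff_mul_le (by norm_num : (0:ℕ) < 2)]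
  omega
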